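/- Assume additionally a ≠ 0 (so s > 0), let N ∈ ℝ^{m×d}, set v = (λ/(1 + 2λs)) aᵀN ∈ ℝ^{1×d}, and let R > 0. If ‖v‖ = |λ|R (where ‖·‖ is the Euclidean norm of a row vector), then λ = (1/(2s))(−1 + ‖aᵀN‖/R) or λ = (1/(2s))(−1 − ‖aᵀN‖/R). -/

import Mathlib

open Matrix

theorem aux_spos
    (m : ℕ) (dg : Fin m → ℝ) (hdg : ∀ i, 0 < dg i)
    (a : Matrix (Fin m) (Fin 1) ℝ) (ha : a ≠ 0) :
    0 < ((aᵀ * (Matrix.diagonal dg)⁻¹ * a) 0 0) := by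
  have hinv : (Matrix.diagonal dg)⁻¹ = Matrix.diagonal (fun i => (dg i)⁻¹) := by
    apply Matrix.inv_eq_left_inv
    rw [Matrix.diagonal_mul_diagonal]
    convert Matrix.diagonal_one
    exact inv_mul_cancel₀ (ne_of_gt (hdg _))
  rw [hinv]
  have hentry : (aᵀ * Matrix.diagonal (fun i => (dg i)⁻¹) * a) 0 0
      = ∑ i, (a i 0)^2 * (dg i)⁻¹ := by
    simp [Matrix.mul_apply, Matrix.diagonal, Finset.mul_sum]
    congr 1; ext i; ring
  rw [hentry]
  have hex : ∃ i j, a i j ≠ 0 := by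
    by_contra h; push_neg at h; exact ha (by ext i j; exact h i j)
  obtain ⟨i, j, hij⟩ := hex
  have hj : j = 0 := Subsingleton.elim _ _
  subst hj
  exact Finset.sum_pos' (fun k _ => mul_nonneg (sq_nonneg _) (le_of_lt (inv_pos.mpr (hdg k))))
    ⟨i, Finset.mem_univ i, mul_pos (pow_two_pos_of_ne_zero hij) (inv_pos.mpr (hdg i))⟩

/-- The possible Lagrange multipliers of the single-constraint collision proximal
problem, determined by the active-constraint condition `‖v‖ = |λ| R`. -/
theorem stmt_18
    (m : ℕ) (hm : 1 ≤ m)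
    (dg : Fin m → ℝ) (hdg : ∀ i, 0 < dg i)
    (D : Matrix (Fin m) (Fin m) ℝ) (hD : D = Matrix.diagonal dg)
    (a : Matrix (Fin m) (Fin 1) ℝ) (ha : a ≠ 0)
    (lam : ℝ) (hlam : lam ≠ 0)
    (s : ℝ) (hs : s = (aᵀ * D⁻¹ * a) 0 0)
    (hden : 1 + 2 * lam * s ≠ 0)
    (d : ℕ) (hd : 1 ≤ d)
    (N : Matrix (Fin m) (Fin d) ℝ)
    (v : Matrix (Fin 1) (Fin d) ℝ)
    (hv : v = (lam / (1 + 2 * lam * s)) • (aᵀ * N))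
    (R : ℝ) (hR : 0 < R)
    (hnorm : Real.sqrt (∑ j : Fin d, v 0 j ^ 2) = |lam| * R) :
    lam = 1 / (2 * s) * (-1 + Real.sqrt (∑ j : Fin d, (aᵀ * N) 0 j ^ 2) / R) ∨
      lam = 1 / (2 * s) * (-1 - Real.sqrt (∑ j : Fin d, (aᵀ * N) 0 j ^ 2) / R) := by
  have hspos : 0 < s := by rw [hs, hD]; exact aux_spos m dg hdg a ha
  set c : ℝ := lam / (1 + 2 * lam * s) with hc
  set W : ℝ := Real.sqrt (∑ j : Fin d, (aᵀ * N) 0 j ^ 2) with hW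
  have hWnn : 0 ≤ ∑ j : Fin d, (aᵀ * N) 0 j ^ 2 :=
    Finset.sum_nonneg fun _ _ => sq_nonneg _
  have hsum : (∑ j : Fin d, v 0 j ^ 2) = c^2 * ∑ j : Fin d, (aᵀ * N) 0 j ^ 2 := by
    rw [hv]; rw [Finset.mul_sum]; congr 1; ext j
    simp [Matrix.smul_apply]; ring
  have hsqrt : Real.sqrt (∑ j : Fin d, v 0 j ^ 2) = |c| * W := by
    rw [hsum, Real.sqrt_mul (sq_nonneg c), Real.sqrt_sq_eq_abs]
  rw [hsqrt] at hnorm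
  -- |c| = |lam| / |1+2 lam s|
  have habs : |c| = |lam| / |1 + 2 * lam * s| := by
    rw [hc, abs_div]
  have key : W = |1 + 2 * lam * s| * R := by
    have hden' : |1 + 2 * lam * s| ≠ 0 := abs_ne_zero.mpr hden
    have hlam' : |lam| ≠ 0 := abs_ne_zero.mpr hlam
    rw [habs] at hnorm
    field_simp [habs] at hnorm
    -- hnorm : |lam| * W = |lam| * |1+2 lam s| * R (some form)
    nlinarith [abs_pos.mpr hlam, abs_pos.mpr hden, hnorm]
  rcases abs_cases (1 + 2 * lam * s) with ⟨h1, _⟩ | ⟨h1, _⟩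
  · left
    rw [h1] at key
    field_simp
    nlinarith [key]
  · right
    rw [h1] at key
    field_simp
    nlinarith [key]
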